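/- A 2-connected simple graph is chordless if and only if it is minimally 2-connected. -/

import Mathlib

/-- A strong edge coloring: any two distinct edges that are adjacent or both
adjacent to a common third edge receive distinct colors. -/
def SimpleGraph.IsStrongEdgeColoring {V : Type*} (G : SimpleGraph V)
    (C : Sym2 V → ℕ) : Prop :=
  ∀ e ∈ G.edgeSet, ∀ f ∈ G.edgeSet, e ≠ f →
    ((∃ v, v ∈ e ∧ v ∈ f) ∨
      ∃ g ∈ G.edgeSet, (∃ v, v ∈ e ∧ v ∈ g) ∧ ∃ w, w ∈ g ∧ w ∈ f) →
    C e ≠ C f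

/-- The strong chromatic index: the least number of colors in a strong edge
coloring of `G`. -/
noncomputable def SimpleGraph.strongChromaticIndex {V : Type*}
    (G : SimpleGraph V) : ℕ :=
  sInf {n | ∃ C : Sym2 V → ℕ, (∀ e ∈ G.edgeSet, C e < n) ∧
    G.IsStrongEdgeColoring C}

/-- A graph is `k`-degenerate if every (induced) subgraph on a nonempty vertex
set has a vertex of degree at most `k` in that subgraph. -/
def SimpleGraph.Degenerate {V : Type*} [Fintype V] (G : SimpleGraph V)
    [DecidableRel G.Adj] (k : ℕ) : Prop :=
  ∀ S : Finset V, S.Nonempty → ∃ v ∈ S, (S.filter (G.Adj v)).card ≤ k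

/-- A graph is 2-connected if it has at least 3 vertices and deleting any
single vertex leaves a connected graph. -/
def SimpleGraph.TwoConnected {V : Type*} [Fintype V] (G : SimpleGraph V) : Prop :=
  3 ≤ Fintype.card V ∧ ∀ v : V, (G.induce {u | u ≠ v}).Connected

/-- A graph is minimally 2-connected if it is 2-connected but deleting any
edge destroys 2-connectedness. -/
def SimpleGraph.MinimallyTwoConnected {V : Type*} [Fintype V]
    (G : SimpleGraph V) : Prop :=
  G.TwoConnected ∧ ∀ e ∈ G.edgeSet, ¬ (G.deleteEdges {e}).TwoConnected

/-- A graph is chordless if every cycle is an induced cycle, i.e. no cycle has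
a chord: any edge joining two vertices of a cycle is an edge of that cycle. -/
def SimpleGraph.Chordless {V : Type*} (G : SimpleGraph V) : Prop :=
  ∀ (v : V) (c : G.Walk v v), c.IsCycle →
    ∀ u w, u ∈ c.support → w ∈ c.support → G.Adj u w → s(u, w) ∈ c.edges


open SimpleGraph Walk

section Helpers
variable {V : Type*}

lemma reach_induce_of_walk (G : SimpleGraph V) (s : Set V) :
    ∀ {a b : V} (p : G.Walk a b) (_ : ∀ z ∈ p.support, z ∈ s)
      (ha : a ∈ s) (hb : b ∈ s),
      (G.induce s).Reachable ⟨a, ha⟩ ⟨b, hb⟩ := by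
  intro a b p
  induction p with
  | nil => intro _ ha hb; exact Reachable.refl _
  | @cons a c b h q ih =>
    intro hs ha hb
    have hc : c ∈ s := hs c (by simp)
    have hadj : (G.induce s).Adj ⟨a, ha⟩ ⟨c, hc⟩ := h
    exact hadj.reachable.trans (ih (fun z hz => hs z (by simp [hz])) hc hb)




lemma walk_of_induce_walk {G : SimpleGraph V} {s : Set V} {a b : ↥s}
    (p : (G.induce s).Walk a b) :
    ∃ q : G.Walk a.1 b.1, ∀ z ∈ q.support, z ∈ s := by
  induction p with
  | nil => exact ⟨Walk.nil, by simp⟩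
  | @cons a c b h q ih =>
    obtain ⟨q', hq'⟩ := ih
    refine ⟨Walk.cons (by exact h) q', ?_⟩
    intro z hz
    rcases List.mem_cons.mp (show z ∈ (a : V) :: q'.support from hz) with rfl | hz'
    · exact a.2
    · exact hq' z hz'

lemma exists_third [Fintype V] (h3 : 3 ≤ Fintype.card V) (a b : V) :
    ∃ x : V, x ≠ a ∧ x ≠ b := by
  classical
  obtain ⟨x, hx⟩ : ∃ x : V, x ∉ ({a, b} : Finset V) := by
    by_contra h'
    push_neg at h'
    have h1 : (Finset.univ : Finset V).card ≤ ({a, b} : Finset V).card :=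
      Finset.card_le_card fun y _ => h' y
    have h2 : ({a, b} : Finset V).card ≤ 2 :=
      le_trans (Finset.card_insert_le a {b}) (by simp)
    rw [Finset.card_univ] at h1
    omega
  simp only [Finset.mem_insert, Finset.mem_singleton, not_or] at hx
  exact ⟨x, hx.1, hx.2⟩

lemma SimpleGraph.TwoConnected.conn {G : SimpleGraph V} [Fintype V] (h : G.TwoConnected) :
    G.Connected := by
  rw [connected_iff]
  refine ⟨?_, ?_⟩
  · intro a b
    obtain ⟨x, hxa, hxb⟩ := exists_third h.1 a b
    obtain ⟨p⟩ := (h.2 x).preconnected ⟨a, hxa.symm⟩ ⟨b, hxb.symm⟩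
    obtain ⟨q, _⟩ := walk_of_induce_walk p
    exact ⟨q⟩
  · have h3 := h.1
    have : 0 < Fintype.card V := by omega
    exact Fintype.card_pos_iff.mp this

lemma exists_adj_ne {G : SimpleGraph V} [Fintype V] (h : G.TwoConnected) (v u : V) :
    ∃ z, G.Adj v z ∧ z ≠ u := by
  by_cases hvu : v = u
  · subst hvu
    have h1 : 1 < Fintype.card V := by have := h.1; omega
    obtain ⟨b, hb⟩ := Fintype.exists_ne_of_one_lt_card h1 v
    obtain ⟨p⟩ := h.conn.preconnected v b
    cases p with
    | nil => exact absurd rfl hb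
    | cons hadj q => exact ⟨_, hadj, hadj.ne'⟩
  · obtain ⟨x, hxv, hxu⟩ := exists_third h.1 v u
    obtain ⟨p⟩ := (h.2 u).preconnected ⟨v, hvu⟩ ⟨x, hxu⟩
    obtain ⟨q, hq⟩ := walk_of_induce_walk p
    cases q with
    | nil => exact absurd rfl hxv.symm
    | @cons _ C _ hadj q' => exact ⟨C, hadj, hq C (by simp)⟩


lemma mem_support_tail_of_closed {G : SimpleGraph V} {v : V} {c : G.Walk v v}
    (hne : c ≠ Walk.nil) {z : V} (hz : z ∈ c.support) : z ∈ c.support.tail := by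
  cases c with
  | nil => exact absurd rfl hne
  | cons h q =>
    rw [support_cons] at hz ⊢
    rcases List.mem_cons.mp hz with rfl | hz'
    · simpa using q.end_mem_support
    · simpa using hz'

/-- Splitting a cycle based at `w` at another vertex `u` gives two paths with
disjoint interiors. -/
lemma cycle_split {G : SimpleGraph V} [DecidableEq V] {w u : V} {c : G.Walk w w}
    (hc : c.IsCycle) (hu : u ∈ c.support) (hne : u ≠ w) :
    (c.takeUntil u hu).IsPath ∧ (c.dropUntil u hu).IsPath ∧
      List.Disjoint (c.takeUntil u hu).support.tail (c.dropUntil u hu).support.tail := by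
  set B1 := c.takeUntil u hu with hB1
  set B2 := c.dropUntil u hu with hB2
  have hsup : c.support = B1.support ++ B2.support.tail := by
    conv_lhs => rw [← take_spec c hu]
    rw [support_append]
  have htail : c.support.tail = B1.support.tail ++ B2.support.tail := by
    rw [hsup, B1.support_eq_cons]
    rw [c.support_eq_cons] at hsup
    simp
  have hnd : (B1.support.tail ++ B2.support.tail).Nodup := htail ▸ hc.support_nodup
  rw [List.nodup_append'] at hnd
  obtain ⟨hnd1, hnd2, hdisj⟩ := hnd
  have huB1 : u ∈ B1.support.tail := by
    have := B1.end_mem_support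
    rw [B1.support_eq_cons] at this
    rcases List.mem_cons.mp this with h' | h'
    · exact absurd h' hne
    · exact h'
  have hwB2 : w ∈ B2.support.tail := by
    have := B2.end_mem_support
    rw [B2.support_eq_cons] at this
    rcases List.mem_cons.mp this with h' | h'
    · exact absurd h'.symm hne
    · exact h'
  refine ⟨?_, ?_, hdisj⟩
  · rw [Walk.isPath_def, B1.support_eq_cons]
    exact List.nodup_cons.mpr ⟨fun hw' => hdisj hw' hwB2, hnd1⟩
  · rw [Walk.isPath_def, B2.support_eq_cons]
    exact List.nodup_cons.mpr ⟨fun hu' => hdisj huB1 hu', hnd2⟩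

lemma path_decomp {G : SimpleGraph V} [DecidableEq V] {a b y : V} (p : G.Walk a b)
    (hy : y ∈ p.support) :
    p.support.tail = (p.takeUntil y hy).support.tail ++ (p.dropUntil y hy).support.tail := by
  conv_lhs => rw [← take_spec p hy]
  rw [support_append, (p.takeUntil y hy).support_eq_cons]
  simp

lemma exists_path_through {G : SimpleGraph V} [DecidableEq V] {w u y : V} {c : G.Walk w w}
    (hc : c.IsCycle) (hu : u ∈ c.support) (hy : y ∈ c.support) (hune : u ≠ w)
    (hyne : y ≠ w) :
    ∃ R : G.Walk y w, R.IsPath ∧ u ∈ R.support ∧ ∀ z ∈ R.support, z ∈ c.support := by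
  obtain ⟨hP1, hP2, hdisj⟩ := cycle_split hc hu hune
  set B1 := c.takeUntil u hu with hB1def
  set B2 := c.dropUntil u hu with hB2def
  have hsub1 : ∀ z ∈ B1.support, z ∈ c.support := fun z hz => support_takeUntil_subset c hu hz
  have hsub2 : ∀ z ∈ B2.support, z ∈ c.support := fun z hz => support_dropUntil_subset c hu hz
  by_cases hyu : y = u
  · subst hyu
    exact ⟨B2, hP2, B2.start_mem_support, hsub2⟩
  by_cases hyB1 : y ∈ B1.support
  · -- y lies on the w → u part; go y → u → w
    set D := B1.dropUntil y hyB1 with hDdef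
    have hD : D.IsPath := hP1.dropUntil hyB1
    have hDtail : ∀ z ∈ D.support.tail, z ∈ B1.support.tail := by
      intro z hz
      rw [path_decomp B1 hyB1]
      exact List.mem_append_right _ hz
    have hyB1t : y ∈ B1.support.tail := by
      rcases List.mem_cons.mp (B1.support_eq_cons ▸ hyB1) with h' | h'
      · exact absurd h' hyne
      · exact h'
    refine ⟨D.append B2, ?_, ?_, ?_⟩
    · rw [Walk.isPath_def, support_append, List.nodup_append']
      refine ⟨hD.support_nodup, (hP2.support_nodup).tail, ?_⟩
      intro z hzD hzB2
      rcases List.mem_cons.mp (D.support_eq_cons ▸ hzD) with rfl | hz'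
      · exact hdisj hyB1t hzB2
      · exact hdisj (hDtail z hz') hzB2
    · rw [mem_support_append_iff]
      exact Or.inl D.end_mem_support
    · intro z hz
      rcases (mem_support_append_iff _ _).mp hz with h' | h'
      · exact hsub1 z (support_dropUntil_subset B1 hyB1 h')
      · exact hsub2 z h'
  · -- y lies on the u → w part; go y → u (backwards) → w (backwards along B1)
    have hyB2 : y ∈ B2.support := by
      have h' : y ∈ B1.support ∨ y ∈ B2.support := by
        rw [← mem_support_append_iff, take_spec]
        exact hy
      tauto
    set T2 := B2.takeUntil y hyB2 with hT2def
    set D2 := B2.dropUntil y hyB2 with hD2def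
    have hT2 : T2.IsPath := hP2.takeUntil hyB2
    have hwD2t : w ∈ D2.support.tail := by
      rcases List.mem_cons.mp (D2.support_eq_cons ▸ D2.end_mem_support) with h' | h'
      · exact absurd h'.symm hyne
      · exact h'
    have hwT2 : w ∉ T2.support := by
      intro hw'
      rcases List.mem_cons.mp (T2.support_eq_cons ▸ hw') with h' | h'
      · exact hune h'.symm
      · have hnd2 : (T2.support.tail ++ D2.support.tail).Nodup := by
          rw [← path_decomp B2 hyB2]
          exact (hP2.support_nodup).tail
        rw [List.nodup_append'] at hnd2
        exact hnd2.2.2 h' hwD2t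
    have hB1r : B1.reverse.support.Nodup := by
      rw [support_reverse, List.nodup_reverse]
      exact hP1.support_nodup
    have hB1rcons : B1.reverse.support = u :: B1.reverse.support.tail :=
      B1.reverse.support_eq_cons
    have hmemB1r : ∀ z ∈ B1.reverse.support.tail, z ∈ B1.support ∧ z ≠ u := by
      intro z hz
      constructor
      · have : z ∈ B1.reverse.support := by rw [hB1rcons]; exact List.mem_cons_of_mem _ hz
        rwa [support_reverse, List.mem_reverse] at this
      · rintro rfl
        rw [hB1rcons, List.nodup_cons] at hB1r
        exact hB1r.1 hz
    refine ⟨T2.reverse.append B1.reverse, ?_, ?_, ?_⟩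
    · rw [Walk.isPath_def, support_append, List.nodup_append']
      refine ⟨by rw [support_reverse, List.nodup_reverse]; exact hT2.support_nodup, ?_, ?_⟩
      · rw [hB1rcons, List.nodup_cons] at hB1r
        exact hB1r.2
      · intro z hzT hzB
        obtain ⟨hzB1, hzu⟩ := hmemB1r z hzB
        have hzT2 : z ∈ T2.support := by rwa [support_reverse, List.mem_reverse] at hzT
        have hzB2 : z ∈ B2.support := support_takeUntil_subset B2 hyB2 hzT2
        rcases List.mem_cons.mp (B2.support_eq_cons ▸ hzB2) with rfl | hz2t
        · exact hzu rfl
        · rcases List.mem_cons.mp (B1.support_eq_cons ▸ hzB1) with rfl | hz1t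
          · exact hwT2 hzT2
          · exact hdisj hz1t hz2t
    · rw [mem_support_append_iff]
      exact Or.inr (by rw [hB1rcons]; exact List.mem_cons_self)
    · intro z hz
      rcases (mem_support_append_iff _ _).mp hz with h' | h'
      · rw [support_reverse, List.mem_reverse] at h'
        exact hsub2 z (support_takeUntil_subset B2 hyB2 h')
      · rw [support_reverse, List.mem_reverse] at h'
        exact hsub1 z h'

lemma exists_arc {G : SimpleGraph V} [DecidableEq V] {v u w : V} {c : G.Walk v v}
    (hc : c.IsCycle) (hu : u ∈ c.support) (hw : w ∈ c.support) (huw : u ≠ w)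
    (x : V) (hxu : x ≠ u) (hxw : x ≠ w) :
    ∃ A : G.Walk u w, (∀ f ∈ A.edges, f ∈ c.edges) ∧ x ∉ A.support := by
  set c1 := c.rotate u hu with hc1def
  have hc1 : c1.IsCycle := hc.rotate hu
  have hnn : c ≠ Walk.nil := hc.ne_nil
  have hw1 : w ∈ c1.support := by
    have h1 : w ∈ c.support.tail := mem_support_tail_of_closed hnn hw
    have h2 : c1.support.tail ~r c.support.tail := support_rotate c u hu
    have h3 : w ∈ c1.support.tail := (h2.perm.mem_iff).mpr h1
    rw [c1.support_eq_cons]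
    exact List.mem_cons_of_mem _ h3
  obtain ⟨hP1, hP2, hdisj⟩ := cycle_split hc1 hw1 huw.symm
  set B1 := c1.takeUntil w hw1 with hB1def
  set B2 := c1.dropUntil w hw1 with hB2def
  have hedge : ∀ f ∈ c1.edges, f ∈ c.edges := fun f hf =>
    ((rotate_edges c u hu).perm.mem_iff).mp hf
  have he1 : ∀ f ∈ B1.edges, f ∈ c.edges := fun f hf =>
    hedge f (edges_takeUntil_subset c1 hw1 hf)
  have he2 : ∀ f ∈ B2.edges, f ∈ c.edges := fun f hf =>
    hedge f (edges_dropUntil_subset c1 hw1 hf)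
  by_cases hx1 : x ∈ B1.support
  · refine ⟨B2.reverse, ?_, ?_⟩
    · intro f hf
      rw [edges_reverse, List.mem_reverse] at hf
      exact he2 f hf
    · rw [support_reverse, List.mem_reverse]
      intro hx2
      have hx1t : x ∈ B1.support.tail := by
        rcases List.mem_cons.mp (B1.support_eq_cons ▸ hx1) with h' | h'
        · exact absurd h' hxu
        · exact h'
      have hx2t : x ∈ B2.support.tail := by
        rcases List.mem_cons.mp (B2.support_eq_cons ▸ hx2) with h' | h'
        · exact absurd h' hxw
        · exact h'
      exact hdisj hx1t hx2t
  · exact ⟨B1, he1, hx1⟩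

lemma exists_prefix_to_set {G : SimpleGraph V} (S : Set V) :
    ∀ {a b : V} (p : G.Walk a b), b ∈ S →
      ∃ (y : V) (q : G.Walk a y), y ∈ S ∧ (∀ z ∈ q.support, z ∈ S → z = y) ∧
        (∀ z ∈ q.support, z ∈ p.support) := by
  classical
  intro a b p
  induction p with
  | nil =>
    intro hb
    exact ⟨_, Walk.nil, hb, by intro z hz _; simpa using hz, by simp⟩
  | @cons a c b h q ih =>
    intro hb
    by_cases ha : a ∈ S
    · exact ⟨a, Walk.nil, ha, by intro z hz _; simpa using hz, by simp⟩
    · obtain ⟨y, q', hy, h1, h2⟩ := ih hb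
      refine ⟨y, Walk.cons h q', hy, ?_, ?_⟩
      · intro z hz hzS
        rcases List.mem_cons.mp (by simpa using hz) with rfl | hz'
        · exact absurd hzS ha
        · exact h1 z hz' hzS
      · intro z hz
        rcases List.mem_cons.mp (by simpa using hz) with rfl | hz'
        · simp
        · simp [h2 z hz']

end Helpers

section Menger
variable {V : Type*} [Fintype V] [DecidableEq V] {G : SimpleGraph V}

lemma cycle_of_adj (h2 : G.TwoConnected) {u v : V} (h : G.Adj u v) :
    ∃ (a : V) (c : G.Walk a a), c.IsCycle ∧ u ∈ c.support ∧ v ∈ c.support := by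
  obtain ⟨z, hvz, hzu⟩ := exists_adj_ne h2 v u
  have hzv : z ≠ v := hvz.ne'
  have huv : u ≠ v := h.ne
  obtain ⟨p⟩ := (h2.2 v).preconnected ⟨z, hzv⟩ ⟨u, huv⟩
  obtain ⟨p0, hp0⟩ := walk_of_induce_walk p
  set p1 := p0.bypass with hp1def
  have hp1 : p1.IsPath := p0.bypass_isPath
  have hp1s : ∀ y ∈ p1.support, y ≠ v := fun y hy => hp0 y (p0.support_bypass_subset hy)
  have hvp1 : v ∉ p1.support := fun hv => hp1s v hv rfl
  refine ⟨u, Walk.cons h (Walk.cons hvz p1), ?_, by simp, by simp⟩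
  rw [Walk.cons_isCycle_iff]
  constructor
  · rw [Walk.isPath_def, support_cons, List.nodup_cons]
    exact ⟨hvp1, hp1.support_nodup⟩
  · rw [edges_cons]
    intro hmem
    rcases List.mem_cons.mp hmem with heq | hmem'
    · rw [Sym2.eq_iff] at heq
      rcases heq with ⟨h1, h2'⟩ | ⟨h1, h2'⟩
      · exact huv h1
      · exact hzu h1.symm
    · exact hvp1 (p1.snd_mem_support_of_mem_edges hmem')

lemma cycle_through_of_walk (h2 : G.TwoConnected) :
    ∀ (n : ℕ) {u v : V}, u ≠ v → ∀ (p : G.Walk u v), p.length ≤ n →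
      ∃ (a : V) (c : G.Walk a a), c.IsCycle ∧ u ∈ c.support ∧ v ∈ c.support := by
  intro n
  induction n with
  | zero =>
    intro u v hne p hlen
    exact absurd (p.eq_of_length_eq_zero (Nat.le_zero.mp hlen)) hne
  | succ n ih =>
    intro u v hne p hlen
    cases p with
    | nil => exact absurd rfl hne
    | @cons _ w _ h q =>
      rw [Walk.length_cons] at hlen
      have hqlen : q.length ≤ n := by omega
      by_cases hwv : w = v
      · subst hwv; exact cycle_of_adj h2 h
      · obtain ⟨a, C, hC, hwC, hvC⟩ := ih hwv q hqlen
        -- rotate C to be based at w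
        set c' := C.rotate w hwC with hc'def
        have hc' : c'.IsCycle := hC.rotate hwC
        have hvc' : v ∈ c'.support := by
          have h1 : v ∈ C.support.tail := mem_support_tail_of_closed hC.ne_nil hvC
          have h3 : v ∈ c'.support.tail := ((support_rotate C w hwC).perm.mem_iff).mpr h1
          rw [c'.support_eq_cons]; exact List.mem_cons_of_mem _ h3
        by_cases huc' : u ∈ c'.support
        · exact ⟨w, c', hc', huc', hvc'⟩
        · -- u not on the cycle; connect u to the cycle avoiding w
          have huw : u ≠ w := h.ne
          have hvw : v ≠ w := fun hh => hwv hh.symm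
          obtain ⟨pp⟩ := (h2.2 w).preconnected ⟨u, huw⟩ ⟨v, hvw⟩
          obtain ⟨P0, hP0⟩ := walk_of_induce_walk pp
          set P := P0.bypass with hPdef
          have hPpath : P.IsPath := P0.bypass_isPath
          have hPw : w ∉ P.support := fun hw' => hP0 w (P0.support_bypass_subset hw') rfl
          -- first vertex of P on the cycle
          obtain ⟨y, Q0, hyc', hQ0only, hQ0P⟩ :=
            exists_prefix_to_set {z | z ∈ c'.support} P hvc'
          set Q := Q0.bypass with hQdef
          have hQpath : Q.IsPath := Q0.bypass_isPath
          have hQonly : ∀ z ∈ Q.support, z ∈ c'.support → z = y := fun z hz =>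
            hQ0only z (Q0.support_bypass_subset hz)
          have hQP : ∀ z ∈ Q.support, z ∈ P.support := fun z hz =>
            hQ0P z (Q0.support_bypass_subset hz)
          have hyw : y ≠ w := by
            intro hh; subst hh
            exact hPw (hQP y Q.end_mem_support)
          obtain ⟨R, hRpath, hvR, hRc⟩ := exists_path_through hc' hvc' hyc' hvw hyw
          have hwQ : w ∉ Q.support := fun hw' => hPw (hQP w hw')
          -- the combined path u → y → w
          have hQ'path : (Q.append R).IsPath := by
            rw [Walk.isPath_def, support_append, List.nodup_append']
            refine ⟨hQpath.support_nodup, (hRpath.support_nodup).tail, ?_⟩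
            intro z hzQ hzR
            have hzc' : z ∈ c'.support := hRc z (List.mem_of_mem_tail hzR)
            have hzy : z = y := hQonly z hzQ hzc'
            subst hzy
            have : z ∉ R.support.tail := by
              have := hRpath.support_nodup
              rw [R.support_eq_cons, List.nodup_cons] at this
              exact this.1
            exact this hzR
          refine ⟨w, Walk.cons h.symm (Q.append R), ?_, ?_, ?_⟩
          · rw [Walk.cons_isCycle_iff]
            refine ⟨hQ'path, ?_⟩
            rw [edges_append]
            intro hmem
            rcases List.mem_append.mp hmem with hm | hm
            · exact hPw (hQP w ((Q.fst_mem_support_of_mem_edges) hm))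
            · exact huc' (hRc u ((R.fst_mem_support_of_mem_edges) (by rwa [Sym2.eq_swap] at hm)))
          · rw [support_cons]
            exact List.mem_cons_of_mem _ (by rw [mem_support_append_iff]; exact Or.inl Q.start_mem_support)
          · rw [support_cons]
            exact List.mem_cons_of_mem _ (by rw [mem_support_append_iff]; exact Or.inr hvR)

lemma cycle_through_pair (h2 : G.TwoConnected) {u v : V} (hne : u ≠ v) :
    ∃ (a : V) (c : G.Walk a a), c.IsCycle ∧ u ∈ c.support ∧ v ∈ c.support := by
  obtain ⟨p⟩ := h2.conn.preconnected u v
  exact cycle_through_of_walk h2 p.length hne p le_rfl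

end Menger

theorem chordless_iff_minimally_two_connected {V : Type*} [Fintype V]
    (G : SimpleGraph V) (h2 : G.TwoConnected) :
    G.Chordless ↔ G.MinimallyTwoConnected := by
  classical
  constructor
  · -- chordless → minimally 2-connected
    intro hch
    refine ⟨h2, ?_⟩
    intro e he hH
    revert he hH
    refine Sym2.ind (fun u v => ?_) e
    intro he hH
    have hadj : G.Adj u v := (SimpleGraph.mem_edgeSet G).mp he
    have hne : u ≠ v := hadj.ne
    obtain ⟨a, c, hc, hu, hv⟩ := cycle_through_pair hH hne
    have hsub : ∀ f ∈ c.edges, f ∈ G.edgeSet := by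
      intro f hf
      have h' := c.edges_subset_edgeSet hf
      rw [edgeSet_deleteEdges] at h'
      exact h'.1
    have hc' : (c.transfer G hsub).IsCycle := hc.transfer hsub
    have hmem := hch a (c.transfer G hsub) hc' u v
      (by rw [Walk.support_transfer]; exact hu)
      (by rw [Walk.support_transfer]; exact hv) hadj
    rw [Walk.edges_transfer] at hmem
    have h3 := c.edges_subset_edgeSet hmem
    rw [edgeSet_deleteEdges] at h3
    exact h3.2 rfl
  · -- minimally 2-connected → chordless
    intro hm v c hc u w hu hw hadj
    by_contra hne
    refine hm.2 s(u, w) ((SimpleGraph.mem_edgeSet G).mpr hadj) ⟨h2.1, ?_⟩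
    intro x
    have hGx := h2.2 x
    rw [connected_iff] at hGx ⊢
    refine ⟨?_, hGx.2⟩
    have step : ∀ (A B : ↥{y | y ≠ x}), (G.induce {y | y ≠ x}).Adj A B →
        ((G.deleteEdges {s(u, w)}).induce {y | y ≠ x}).Reachable A B := by
      rintro ⟨p, hp⟩ ⟨r, hr⟩ hAdj
      have hpr : G.Adj p r := hAdj
      by_cases hf : s(p, r) = s(u, w)
      · rw [Sym2.eq_iff] at hf
        rcases hf with ⟨rfl, rfl⟩ | ⟨rfl, rfl⟩
        · obtain ⟨A, hAe, hAx⟩ := exists_arc hc hu hw hadj.ne x (Ne.symm hp) (Ne.symm hr)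
          have hAH : ∀ f ∈ A.edges, f ∈ (G.deleteEdges {s(p, r)}).edgeSet := by
            intro f hf'
            rw [edgeSet_deleteEdges]
            refine ⟨A.edges_subset_edgeSet hf', ?_⟩
            simp only [Set.mem_singleton_iff]
            intro hfe
            exact hne (hfe ▸ hAe f hf')
          exact reach_induce_of_walk _ {y | y ≠ x} (A.transfer _ hAH)
            (by rw [Walk.support_transfer]; intro z hz
                show z ≠ x
                intro hzx; exact hAx (hzx ▸ hz)) hp hr
        · obtain ⟨A, hAe, hAx⟩ := exists_arc hc hu hw hadj.ne x (Ne.symm hr) (Ne.symm hp)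
          have hAH : ∀ f ∈ A.edges, f ∈ (G.deleteEdges {s(r, p)}).edgeSet := by
            intro f hf'
            rw [edgeSet_deleteEdges]
            refine ⟨A.edges_subset_edgeSet hf', ?_⟩
            simp only [Set.mem_singleton_iff]
            intro hfe
            exact hne (hfe ▸ hAe f hf')
          exact (reach_induce_of_walk _ {y | y ≠ x} (A.transfer _ hAH)
            (by rw [Walk.support_transfer]; intro z hz
                show z ≠ x
                intro hzx; exact hAx (hzx ▸ hz)) hr hp).symm
      · refine SimpleGraph.Adj.reachable ?_
        show (G.deleteEdges {s(u, w)}).Adj p r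
        rw [SimpleGraph.deleteEdges_adj]
        exact ⟨hpr, by simpa using hf⟩
    intro A B
    obtain ⟨q⟩ := hGx.1 A B
    induction q with
    | nil => exact Reachable.refl _
    | cons h' q' ih => exact (step _ _ h').trans ih
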